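/- Let L_m = {e} ∪ {aⁿ x₁⋯x_m dⁿ | n ≥ 1, x_i ∈ {b,c}} and let G be any propagating 1-limited 0L system (single table, possibly several rules per letter, each step rewriting exactly one occurrence of each distinct letter present) with L(G) = L_m. Suppose the only rule of G with left side a is a → a^i for some fixed i ≥ 2. Then every word of L_m containing exactly one occurrence of a must be derived directly (in one step) from the axiom e, and hence G has at least 2^m rules with left side e. -/
import Mathlib


/-- One k-limited derivation step: for each letter x, exactly min(k, |v|_x) occurrences
of x in v are rewritten, each by some rule of R with left side x; the remaining
occurrences stay unchanged. -/
def klStep {V : Type*} [DecidableEq V] (k : ℕ) (R : Set (V × List V)) (v w : List V) : Prop :=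
  ∃ (S : Finset (Fin v.length)) (f : Fin v.length → List V),
    (∀ x : V, (S.filter (fun i => v.get i = x)).card = min k (v.count x)) ∧
    (∀ i ∈ S, (v.get i, f i) ∈ R) ∧
    (∀ i, i ∉ S → f i = [v.get i]) ∧
    w = (List.ofFn f).flatten

/-- Deterministic k-limited step with rule function P. -/
def detStep {V : Type*} [DecidableEq V] (k : ℕ) (P : V → List V) : List V → List V → Prop :=
  klStep k {p | p.2 = P p.1}

/-- The language generated from axiom ω by a step relation. -/
def lang {V : Type*} (step : List V → List V → Prop) (ω : List V) : Set (List V) :=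
  {w | Relation.ReflTransGen step ω w}

inductive V5 : Type
  | a | b | c | d | e
deriving DecidableEq

open V5

/-- L_m = {e} ∪ {aⁿ w dⁿ | n ≥ 1, w ∈ {b,c}^m}. -/
def Lm (m : ℕ) : Set (List V5) :=
  {[e]} ∪ {z | ∃ n ≥ 1, ∃ w : List V5,
    w.length = m ∧ (∀ x ∈ w, x = b ∨ x = c) ∧
    z = List.replicate n a ++ w ++ List.replicate n d}

lemma fin_one (i : Fin ([e] : List V5).length) : i = ⟨0, by simp⟩ := by
  have : i.1 = 0 := Nat.lt_one_iff.mp (by simpa using i.2)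
  exact Fin.ext this

lemma sum_get_eq_count (v : List V5) (x : V5) :
    (∑ i : Fin v.length, if v.get i = x then 1 else 0) = v.count x := by
  induction v with
  | nil => simp
  | cons h t ih =>
    have key : (∑ i : Fin (h :: t).length, if (h :: t).get i = x then 1 else 0)
        = (if h = x then 1 else 0) + ∑ i : Fin t.length, if t.get i = x then 1 else 0 :=
      Fin.sum_univ_succ _
    rw [key, ih, List.count_cons]
    by_cases hx : h = x <;> simp [hx, Nat.add_comm]

lemma card_filter_get (v : List V5) (x : V5) :
    (Finset.univ.filter (fun i : Fin v.length => v.get i = x)).card = v.count x := by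
  rw [Finset.card_filter]
  simpa using sum_get_eq_count v x

lemma step_from_e (R : Finset (V5 × List V5)) (z : List V5) :
    klStep 1 (↑R : Set (V5 × List V5)) [e] z ↔ (e, z) ∈ R := by
  constructor
  · rintro ⟨S, f, hS, hR, hnot, rfl⟩
    have h1 := hS e
    have hfil : S.filter (fun i => [e].get i = e) = S := by
      apply Finset.filter_true_of_mem
      intro i _
      rw [fin_one i]; rfl
    rw [hfil] at h1
    simp at h1
    have h0 : (⟨0, by simp⟩ : Fin ([e].length)) ∈ S := by
      rcases Finset.card_eq_one.mp h1 with ⟨i0, hi0⟩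
      rw [hi0, ← fin_one i0]; exact Finset.mem_singleton_self _
    have := hR _ h0
    simpa [List.ofFn_succ] using this
  · intro h
    refine ⟨Finset.univ, fun _ => z, ?_, ?_, ?_, ?_⟩
    · intro x
      rw [card_filter_get]
      cases x <;> simp
    · intro i _
      rw [fin_one i]
      simpa using h
    · intro i hi; exact absurd (Finset.mem_univ i) hi
    · simp [List.ofFn_succ]

lemma count_grow (R : Finset (V5 × List V5)) (i : ℕ) (hi : 2 ≤ i)
    (ha : ∀ w : List V5, (a, w) ∈ R ↔ w = List.replicate i a)
    (v z : List V5) (hv : 1 ≤ v.count a)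
    (h : klStep 1 (↑R : Set (V5 × List V5)) v z) : v.count a + 1 ≤ z.count a := by
  obtain ⟨S, f, hS, hR, hnot, rfl⟩ := h
  have hz : ((List.ofFn f).flatten).count a = ∑ j : Fin v.length, (f j).count a := by
    rw [List.count_flatten, List.map_ofFn, List.sum_ofFn]; rfl
  set Sa := Finset.univ.filter (fun j : Fin v.length => v.get j = a) with hSa
  set T := S.filter (fun j => v.get j = a) with hT
  have hTcard : T.card = 1 := by
    have := hS a; rw [← hT] at this; omega
  have hTsub : T ⊆ Sa := by
    intro j hj
    rw [hT, Finset.mem_filter] at hj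
    rw [hSa, Finset.mem_filter]
    exact ⟨Finset.mem_univ j, hj.2⟩
  have hSacard : Sa.card = v.count a := card_filter_get v a
  obtain ⟨j0, hj0⟩ := Finset.card_eq_one.mp hTcard
  have hsplit : ∑ j ∈ Sa \ T, (f j).count a + ∑ j ∈ T, (f j).count a
      = ∑ j ∈ Sa, (f j).count a := Finset.sum_sdiff hTsub
  have h1 : ∑ j ∈ T, (f j).count a = i := by
    rw [hj0, Finset.sum_singleton]
    have hj0T : j0 ∈ T := hj0 ▸ Finset.mem_singleton_self j0
    rw [hT, Finset.mem_filter] at hj0T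
    have hr := hR j0 hj0T.1
    rw [hj0T.2] at hr
    rw [(ha _).mp hr, List.count_replicate_self]
  have h2 : ∀ j ∈ Sa \ T, (f j).count a = 1 := by
    intro j hj
    rw [Finset.mem_sdiff] at hj
    have hga : v.get j = a := by
      have := hj.1; rw [hSa, Finset.mem_filter] at this; exact this.2
    have hjS : j ∉ S := fun hjS => hj.2 (by rw [hT, Finset.mem_filter]; exact ⟨hjS, hga⟩)
    rw [hnot j hjS, hga]; simp
  have h3 : ∑ j ∈ Sa \ T, (f j).count a = v.count a - 1 := by
    rw [Finset.sum_congr rfl h2, Finset.sum_const, smul_eq_mul, mul_one,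
      Finset.card_sdiff_of_subset hTsub, hSacard, hTcard]
  have h4 : ∑ j ∈ Sa, (f j).count a ≤ ∑ j : Fin v.length, (f j).count a :=
    Finset.sum_le_sum_of_subset (Finset.subset_univ _)
  have h5 : v.count a + 1 ≤ ∑ j ∈ Sa, (f j).count a := by
    rw [← hsplit, h1, h3]; omega
  rw [hz]; exact le_trans h5 h4

/-- If a 1ℓP0L system with rule set R generates L_m, is propagating, and its only rule
with left side a is a → a^i for a fixed i ≥ 2, then every word of L_m with exactly one
occurrence of a is derived directly (in one step) from the axiom e, and R contains at
least 2^m rules with left side e. -/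
theorem stmt9 (m : ℕ) (hm : 1 ≤ m) (R : Finset (V5 × List V5))
    (hcomplete : ∀ x : V5, ∃ w, (x, w) ∈ R)
    (hprop : ∀ p ∈ R, p.2 ≠ ([] : List V5))
    (hgen : lang (klStep 1 (↑R : Set (V5 × List V5))) [e] = Lm m)
    (harule : ∃ i ≥ 2, ∀ w : List V5, (a, w) ∈ R ↔ w = List.replicate i a) :
    (∀ z ∈ Lm m, z.count a = 1 → klStep 1 (↑R : Set (V5 × List V5)) [e] z) ∧
    2 ^ m ≤ (R.filter (fun p => p.1 = e)).card := by
  obtain ⟨i, hi, ha⟩ := harule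
  have part1 : ∀ z ∈ Lm m, z.count a = 1 → klStep 1 (↑R : Set (V5 × List V5)) [e] z := by
    intro z hz hcz
    have hz' : z ∈ lang (klStep 1 (↑R : Set (V5 × List V5))) [e] := by rw [hgen]; exact hz
    rcases Relation.ReflTransGen.cases_tail hz' with heq | ⟨u, hu, hstep⟩
    · rw [heq] at hcz; simp [List.count_cons] at hcz
    · have huL : u ∈ Lm m := by rw [← hgen]; exact hu
      rcases huL with h1 | ⟨n, hn, w, hwl, hwbc, rfl⟩
      · rw [Set.mem_singleton_iff] at h1
        rw [h1] at hstep; exact hstep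
      · exfalso
        have hcu : 1 ≤ (List.replicate n a ++ w ++ List.replicate n d).count a := by
          rw [List.count_append, List.count_append, List.count_replicate_self]
          omega
        have := count_grow R i hi ha _ z hcu hstep
        omega
  refine ⟨part1, ?_⟩
  classical
  have key : ∀ g : Fin m → Bool,
      (e, a :: ((List.ofFn fun j => if g j then b else c) ++ [d])) ∈
        R.filter (fun p => p.1 = e) := by
    intro g
    set w := List.ofFn fun j => if g j then b else c with hw
    have hwm : w.length = m := by simp [hw]
    have hwbc : ∀ x ∈ w, x = b ∨ x = c := by
      intro x hx
      rw [hw, List.mem_ofFn] at hx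
      obtain ⟨j, hj⟩ := hx
      by_cases hg : g j
      · left; rw [← hj]; simp [hg]
      · right; rw [← hj]; simp [hg]
    have hna : a ∉ w := by
      intro hx
      rcases hwbc a hx with h | h <;> exact absurd h (by decide)
    have hzL : (a :: (w ++ [d])) ∈ Lm m :=
      Or.inr ⟨1, le_refl 1, w, hwm, hwbc, by simp⟩
    have hcz : (a :: (w ++ [d])).count a = 1 := by
      rw [List.count_cons, List.count_append, List.count_eq_zero.mpr hna]
      simp
    have hstep := part1 _ hzL hcz
    rw [step_from_e] at hstep
    rw [Finset.mem_filter]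
    exact ⟨hstep, rfl⟩
  have inj : Set.InjOn
      (fun g : Fin m → Bool => (e, a :: ((List.ofFn fun j => if g j then b else c) ++ [d])))
      ↑(Finset.univ : Finset (Fin m → Bool)) := by
    intro g1 _ g2 _ hgg
    have hgg2 : (List.ofFn fun j => if g1 j then b else c)
        = List.ofFn fun j => if g2 j then b else c := by
      have := congrArg Prod.snd hgg
      simpa using this
    have := List.ofFn_inj.mp hgg2
    funext j
    have hj := congrFun this j
    by_cases h1 : g1 j <;> by_cases h2 : g2 j <;> simp [h1, h2] at hj ⊢
  have hcard := Finset.card_le_card_of_injOn _ (fun g _ => key g) inj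
  simpa using hcard
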